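/- Let E be a finite-dimensional real normed vector space and C : E → E a C^∞ map such that the induced multiplication ∘ is associative with identity e, where e is a constant map (so ∇e = 0 and ∇_e e = 0). Let E' be a smooth vector field and for each λ ≠ 0 define the operator H_λ on smooth vector fields by H_λ(Y) := Y∘E' + λ⁻¹(∇_Y E' − Y). Then the following are equivalent: (i) for every λ ≠ 0 and all smooth vector fields X, Y, the flatness condition holds: H_λ(X∘Y) = X∘H_λ(Y) + λ⁻¹(∇_X(H_λ(Y)) − X∘Y − H_λ(∇_X Y)); (ii) E' is an Euler field of weight 1 compatible with ∇, i.e. P_{E'}(X,Y) = X∘Y for all smooth vector fields X, Y, and for every constant vector field Z the bracket [E', Z] is again a constant vector field. -/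

import Mathlib

open ContDiff

variable {E : Type*} [NormedAddCommGroup E] [NormedSpace ℝ E]

/-- Lie bracket of vector fields on a normed space:
`[X,Y](p) = (DY)(p)(X(p)) - (DX)(p)(Y(p))`. -/
noncomputable def lieB (X Y : E → E) : E → E :=
  fun p => fderiv ℝ Y p (X p) - fderiv ℝ X p (Y p)

/-- Multiplication on vector fields induced by a vector potential `C`:
`(X ∘ Y)(p) = (D²C)(p)(X(p), Y(p))`. -/
noncomputable def mulC (C : E → E) (X Y : E → E) : E → E :=
  fun p => fderiv ℝ (fderiv ℝ C) p (X p) (Y p)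

/-- The Hertling–Manin expression `P_X(Z,W) = [X, Z∘W] - [X,Z]∘W - Z∘[X,W]`. -/
noncomputable def hmP (C : E → E) (X Z W : E → E) : E → E :=
  fun p => lieB X (mulC C Z W) p - mulC C (lieB X Z) W p - mulC C Z (lieB X W) p

lemma infty_add_one : (∞ : WithTop ℕ∞) + 1 ≤ ∞ := by norm_num

lemma two_le_infty : (2 : WithTop ℕ∞) ≤ ∞ := by
  rw [show ((2:WithTop ℕ∞)) = ((2:ℕ∞):WithTop ℕ∞) by norm_cast]
  exact_mod_cast le_top

lemma aux_fd1 {f : E → E →L[ℝ] E} {g : E → E} {p : E}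
    (hf : DifferentiableAt ℝ f p) (hg : DifferentiableAt ℝ g p) (x : E) :
    fderiv ℝ (fun q => f q (g q)) p x = fderiv ℝ f p x (g p) + f p (fderiv ℝ g p x) := by
  rw [(hf.hasFDerivAt.clm_apply hg.hasFDerivAt).fderiv]
  simp [ContinuousLinearMap.add_apply]
  abel

lemma aux_fd2 {f : E → E →L[ℝ] E →L[ℝ] E} {g h : E → E} {p : E}
    (hf : DifferentiableAt ℝ f p) (hg : DifferentiableAt ℝ g p) (hh : DifferentiableAt ℝ h p)
    (x : E) :
    fderiv ℝ (fun q => f q (g q) (h q)) p x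
      = fderiv ℝ f p x (g p) (h p) + f p (fderiv ℝ g p x) (h p) + f p (g p) (fderiv ℝ h p x) := by
  have h1 := hf.hasFDerivAt.clm_apply hg.hasFDerivAt
  rw [(h1.clm_apply hh.hasFDerivAt).fderiv]
  simp [ContinuousLinearMap.add_apply]
  abel

section Symm
variable {C : E → E}

lemma one_le_infty : (∞ : WithTop ℕ∞) ≠ 0 := by simp

/-- symmetry of the second derivative -/
lemma symm2 (hC : ContDiff ℝ ∞ C) (p u v : E) :
    fderiv ℝ (fderiv ℝ C) p u v = fderiv ℝ (fderiv ℝ C) p v u :=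
  (hC.contDiffAt.isSymmSndFDerivAt (by rw [minSmoothness_of_isRCLikeNormedField]; exact two_le_infty)).eq u v

/-- symmetry of the third derivative in the first two slots -/
lemma symm3a (hC : ContDiff ℝ ∞ C) (p x y z : E) :
    fderiv ℝ (fderiv ℝ (fderiv ℝ C)) p x y z = fderiv ℝ (fderiv ℝ (fderiv ℝ C)) p y x z :=
  congrArg (fun A : E →L[ℝ] E => A z)
    (((hC.fderiv_right infty_add_one).contDiffAt.isSymmSndFDerivAt (by rw [minSmoothness_of_isRCLikeNormedField]; exact two_le_infty)).eq x y)

/-- `D³C` applied with constant last two slots -/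
lemma fd3_const (hC : ContDiff ℝ ∞ C) (p x y z : E) :
    fderiv ℝ (fun q => fderiv ℝ (fderiv ℝ C) q y z) p x
      = fderiv ℝ (fderiv ℝ (fderiv ℝ C)) p x y z := by
  have hB : ContDiff ℝ ∞ (fderiv ℝ (fderiv ℝ C)) :=
    (hC.fderiv_right infty_add_one).fderiv_right infty_add_one
  rw [aux_fd2 (hB.differentiable one_le_infty).differentiableAt
    (differentiableAt_const y) (differentiableAt_const z) x]
  simp

/-- symmetry of the third derivative in the last two slots -/
lemma symm3b (hC : ContDiff ℝ ∞ C) (p x y z : E) :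
    fderiv ℝ (fderiv ℝ (fderiv ℝ C)) p x y z = fderiv ℝ (fderiv ℝ (fderiv ℝ C)) p x z y := by
  rw [← fd3_const hC p x y z, ← fd3_const hC p x z y,
    show (fun q => fderiv ℝ (fderiv ℝ C) q y z) = (fun q => fderiv ℝ (fderiv ℝ C) q z y)
      from funext fun q => symm2 hC q y z]

/-- cyclic symmetry needed below -/
lemma symm3c (hC : ContDiff ℝ ∞ C) (p x y z : E) :
    fderiv ℝ (fderiv ℝ (fderiv ℝ C)) p x y z = fderiv ℝ (fderiv ℝ (fderiv ℝ C)) p z x y := by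
  rw [symm3a hC, symm3b hC, symm3a hC, symm3b hC]

end Symm

section Main
variable {C E' : E → E}

/-- derivative of the function underlying `H l Y` -/
lemma hd_gen (hC : ContDiff ℝ ∞ C) (hE' : ContDiff ℝ ∞ E') (l : ℝ) {Y : E → E}
    (hY : ContDiff ℝ ∞ Y) (p x : E) :
    fderiv ℝ (fun q => fderiv ℝ (fderiv ℝ C) q (Y q) (E' q)
        + l⁻¹ • (fderiv ℝ E' q (Y q) - Y q)) p x
      = (fderiv ℝ (fderiv ℝ (fderiv ℝ C)) p x (Y p) (E' p)
          + fderiv ℝ (fderiv ℝ C) p (fderiv ℝ Y p x) (E' p)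
          + fderiv ℝ (fderiv ℝ C) p (Y p) (fderiv ℝ E' p x))
        + l⁻¹ • ((fderiv ℝ (fderiv ℝ E') p x (Y p) + fderiv ℝ E' p (fderiv ℝ Y p x))
            - fderiv ℝ Y p x) := by
  have hB : ContDiff ℝ ∞ (fderiv ℝ (fderiv ℝ C)) :=
    (hC.fderiv_right infty_add_one).fderiv_right infty_add_one
  have hE1 : ContDiff ℝ ∞ (fderiv ℝ E') := hE'.fderiv_right infty_add_one
  have d1 : DifferentiableAt ℝ (fun q => fderiv ℝ (fderiv ℝ C) q (Y q) (E' q)) p :=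
    ((hB.differentiable one_le_infty p).clm_apply (hY.differentiable one_le_infty p)).clm_apply
      (hE'.differentiable one_le_infty p)
  have d2 : DifferentiableAt ℝ (fun q => fderiv ℝ E' q (Y q)) p :=
    (hE1.differentiable one_le_infty p).clm_apply (hY.differentiable one_le_infty p)
  have d3 : DifferentiableAt ℝ Y p := hY.differentiable one_le_infty p
  rw [fderiv_fun_add d1 ((d2.fun_sub d3).fun_const_smul l⁻¹), ContinuousLinearMap.add_apply,
    fderiv_fun_const_smul (d2.fun_sub d3) l⁻¹, ContinuousLinearMap.smul_apply,
    fderiv_fun_sub d2 d3, ContinuousLinearMap.sub_apply,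
    aux_fd2 (hB.differentiable one_le_infty p) d3 (hE'.differentiable one_le_infty p) x,
    aux_fd1 (hE1.differentiable one_le_infty p) d3 x]

end Main

section Main2
variable {C E' : E → E}

lemma hd_const (hC : ContDiff ℝ ∞ C) (hE' : ContDiff ℝ ∞ E') (l : ℝ) (b p x : E) :
    fderiv ℝ (fun q => fderiv ℝ (fderiv ℝ C) q b (E' q) + l⁻¹ • (fderiv ℝ E' q b - b)) p x
      = (fderiv ℝ (fderiv ℝ (fderiv ℝ C)) p x b (E' p)
          + fderiv ℝ (fderiv ℝ C) p b (fderiv ℝ E' p x))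
        + l⁻¹ • fderiv ℝ (fderiv ℝ E') p x b := by
  have hB : ContDiff ℝ ∞ (fderiv ℝ (fderiv ℝ C)) :=
    (hC.fderiv_right infty_add_one).fderiv_right infty_add_one
  have hE1 : ContDiff ℝ ∞ (fderiv ℝ E') := hE'.fderiv_right infty_add_one
  have d1 : DifferentiableAt ℝ (fun q => fderiv ℝ (fderiv ℝ C) q b (E' q)) p :=
    ((hB.differentiable one_le_infty p).clm_apply (differentiableAt_const b)).clm_apply
      (hE'.differentiable one_le_infty p)
  have d2 : DifferentiableAt ℝ (fun q => fderiv ℝ E' q b) p :=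
    (hE1.differentiable one_le_infty p).clm_apply (differentiableAt_const b)
  rw [fderiv_fun_add d1 ((d2.fun_sub (differentiableAt_const b)).fun_const_smul l⁻¹),
    ContinuousLinearMap.add_apply,
    fderiv_fun_const_smul (d2.fun_sub (differentiableAt_const b)) l⁻¹, ContinuousLinearMap.smul_apply,
    fderiv_fun_sub d2 (differentiableAt_const b), ContinuousLinearMap.sub_apply,
    aux_fd2 (hB.differentiable one_le_infty p) (differentiableAt_const b)
      (hE'.differentiable one_le_infty p) x,
    aux_fd1 (hE1.differentiable one_le_infty p) (differentiableAt_const b) x]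
  simp

end Main2

lemma extract {A X Y Z G : E}
    (h : ∀ l : ℝ, l ≠ 0 → A + l⁻¹ • X = (A + l⁻¹ • Y) + l⁻¹ • (Z + l⁻¹ • G)) :
    G = 0 ∧ X = Y + Z := by
  have h' : ∀ l : ℝ, l ≠ 0 → X = (Y + Z) + l⁻¹ • G := by
    intro l hl
    have h0 := h l hl
    rw [add_assoc, ← smul_add] at h0
    have h1 := add_left_cancel h0
    have h2 := smul_right_injective E (inv_ne_zero hl) h1
    rw [h2, ← add_assoc]
  have h1 := h' 1 one_ne_zero
  have h2 := h' 2 two_ne_zero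
  rw [inv_one, one_smul] at h1
  have hG : G = 0 := by
    have h3 := add_left_cancel (h1.symm.trans h2)
    have h4 : (1 - (2:ℝ)⁻¹) • G = 0 := by
      rw [sub_smul, one_smul, ← h3, sub_self]
    rcases smul_eq_zero.1 h4 with h | h
    · norm_num at h
    · exact h
  exact ⟨hG, by rw [h1, hG, add_zero]⟩

lemma hmP_eq {C E' : E → E} (hC : ContDiff ℝ ∞ C) {X Y : E → E}
    (hX : ContDiff ℝ ∞ X) (hY : ContDiff ℝ ∞ Y) (p : E) :
    hmP C E' X Y p
      = fderiv ℝ (fderiv ℝ (fderiv ℝ C)) p (E' p) (X p) (Y p)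
        - fderiv ℝ E' p (fderiv ℝ (fderiv ℝ C) p (X p) (Y p))
        + fderiv ℝ (fderiv ℝ C) p (fderiv ℝ E' p (X p)) (Y p)
        + fderiv ℝ (fderiv ℝ C) p (X p) (fderiv ℝ E' p (Y p)) := by
  have hB : ContDiff ℝ ∞ (fderiv ℝ (fderiv ℝ C)) :=
    (hC.fderiv_right infty_add_one).fderiv_right infty_add_one
  unfold hmP lieB mulC
  rw [aux_fd2 (hB.differentiable one_le_infty p) (hX.differentiable one_le_infty p)
    (hY.differentiable one_le_infty p) (E' p)]
  simp only [map_sub, ContinuousLinearMap.sub_apply]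
  abel


/-- the operator `H_λ(Y) = Y∘E' + λ⁻¹(∇_Y E' - Y)` satisfies the
flatness condition (3.5) for every `λ ≠ 0` iff `E'` is an Euler field of weight 1
compatible with `∇`. -/
theorem stmt13 {E : Type*} [NormedAddCommGroup E] [NormedSpace ℝ E] [FiniteDimensional ℝ E]
    (C : E → E) (hC : ContDiff ℝ ∞ C)
    (hassoc : ∀ p u v w : E,
      fderiv ℝ (fderiv ℝ C) p (fderiv ℝ (fderiv ℝ C) p u v) w
        = fderiv ℝ (fderiv ℝ C) p u (fderiv ℝ (fderiv ℝ C) p v w))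
    (e : E → E) (u : E) (he : e = fun _ => u)
    (hid : ∀ p v : E, fderiv ℝ (fderiv ℝ C) p (e p) v = v)
    (E' : E → E) (hE' : ContDiff ℝ ∞ E')
    (H : ℝ → (E → E) → (E → E))
    (hH : ∀ (l : ℝ) (Y : E → E),
      H l Y = fun p => mulC C Y E' p + l⁻¹ • (fderiv ℝ E' p (Y p) - Y p)) :
    (∀ l : ℝ, l ≠ 0 → ∀ X Y : E → E, ContDiff ℝ ∞ X → ContDiff ℝ ∞ Y →
      H l (mulC C X Y)
        = fun p => mulC C X (H l Y) p
          + l⁻¹ • (fderiv ℝ (H l Y) p (X p) - mulC C X Y p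
            - H l (fun q => fderiv ℝ Y q (X q)) p)) ↔
    ((∀ X Y : E → E, ContDiff ℝ ∞ X → ContDiff ℝ ∞ Y →
        hmP C E' X Y = mulC C X Y) ∧
     (∀ z : E, ∃ w : E, ∀ p : E, lieB E' (fun _ => z) p = w)) := by
  have hE1 : ContDiff ℝ ∞ (fderiv ℝ E') := hE'.fderiv_right infty_add_one
  constructor
  · intro hflat
    have cond : ∀ p a b : E,
        fderiv ℝ (fderiv ℝ E') p a b = 0 ∧
        fderiv ℝ E' p (fderiv ℝ (fderiv ℝ C) p a b) - fderiv ℝ (fderiv ℝ C) p a b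
          = (fderiv ℝ (fderiv ℝ C) p a (fderiv ℝ E' p b) - fderiv ℝ (fderiv ℝ C) p a b)
            + ((fderiv ℝ (fderiv ℝ (fderiv ℝ C)) p a b (E' p)
                + fderiv ℝ (fderiv ℝ C) p b (fderiv ℝ E' p a))
               - fderiv ℝ (fderiv ℝ C) p a b) := by
      intro p a b
      refine extract (A := fderiv ℝ (fderiv ℝ C) p a (fderiv ℝ (fderiv ℝ C) p b (E' p))) ?_
      intro l hl
      have hp := congrFun (hflat l hl (fun _ => a) (fun _ => b) contDiff_const contDiff_const) p
      simp only [hH, mulC, fderiv_const_apply, ContinuousLinearMap.zero_apply, map_zero,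
        smul_zero, sub_zero, add_zero, zero_sub] at hp
      rw [hd_const hC hE' l b p a] at hp
      rw [hassoc p a b (E' p)] at hp
      simp only [map_add, map_smul, map_sub] at hp
      linear_combination (norm := module) hp
    constructor
    · intro X Y hX hY
      funext p
      rw [hmP_eq hC hX hY p]
      show _ = fderiv ℝ (fderiv ℝ C) p (X p) (Y p)
      have hF := (cond p (X p) (Y p)).2
      rw [show fderiv ℝ (fderiv ℝ (fderiv ℝ C)) p (E' p) (X p) (Y p)
            = fderiv ℝ (fderiv ℝ (fderiv ℝ C)) p (X p) (Y p) (E' p) from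
          (symm3c hC p (X p) (Y p) (E' p)).symm,
        show fderiv ℝ (fderiv ℝ C) p (fderiv ℝ E' p (X p)) (Y p)
            = fderiv ℝ (fderiv ℝ C) p (Y p) (fderiv ℝ E' p (X p)) from
          symm2 hC p _ _]
      linear_combination (norm := module) -hF
    · intro z
      have hzero : ∀ x : E, fderiv ℝ (fderiv ℝ E') x = 0 := by
        intro x
        apply ContinuousLinearMap.ext; intro v
        apply ContinuousLinearMap.ext; intro w
        simpa using (cond x v w).1
      have hconst : ∀ p : E, fderiv ℝ E' p = fderiv ℝ E' 0 :=
        fun p => is_const_of_fderiv_eq_zero (hE1.differentiable one_le_infty) hzero p 0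
      refine ⟨-(fderiv ℝ E' 0 z), fun p => ?_⟩
      simp [lieB, hconst p]
  · rintro ⟨heuler, hconst⟩ l hl X Y hX hY
    have hG : ∀ p a b : E, fderiv ℝ (fderiv ℝ E') p a b = 0 := by
      intro p a b
      obtain ⟨w, hw⟩ := hconst b
      have hfun : (fun q => fderiv ℝ E' q b) = fun _ => -w := by
        funext q
        have h := hw q
        simp only [lieB, fderiv_const_apply, ContinuousLinearMap.zero_apply, zero_sub] at h
        rw [← h, neg_neg]
      have haux : fderiv ℝ (fun q => fderiv ℝ E' q b) p a = fderiv ℝ (fderiv ℝ E') p a b := by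
        rw [aux_fd1 (hE1.differentiable one_le_infty p) (differentiableAt_const b) a]
        simp
      rw [← haux, hfun, fderiv_const_apply, ContinuousLinearMap.zero_apply]
    have hF : ∀ p a b : E,
        fderiv ℝ E' p (fderiv ℝ (fderiv ℝ C) p a b) - fderiv ℝ (fderiv ℝ C) p a b
          = (fderiv ℝ (fderiv ℝ C) p a (fderiv ℝ E' p b) - fderiv ℝ (fderiv ℝ C) p a b)
            + ((fderiv ℝ (fderiv ℝ (fderiv ℝ C)) p a b (E' p)
                + fderiv ℝ (fderiv ℝ C) p b (fderiv ℝ E' p a))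
               - fderiv ℝ (fderiv ℝ C) p a b) := by
      intro p a b
      have h := congrFun (heuler (fun _ => a) (fun _ => b) contDiff_const contDiff_const) p
      rw [hmP_eq hC contDiff_const contDiff_const p] at h
      simp only [mulC] at h
      rw [show fderiv ℝ (fderiv ℝ (fderiv ℝ C)) p (E' p) a b
            = fderiv ℝ (fderiv ℝ (fderiv ℝ C)) p a b (E' p) from
          (symm3c hC p a b (E' p)).symm,
        show fderiv ℝ (fderiv ℝ C) p (fderiv ℝ E' p a) b
            = fderiv ℝ (fderiv ℝ C) p b (fderiv ℝ E' p a) from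
          symm2 hC p _ _] at h
      linear_combination (norm := module) -h
    funext p
    simp only [hH, mulC]
    rw [hd_gen hC hE' l hY p (X p), hassoc p (X p) (Y p) (E' p), hG p (X p) (Y p)]
    have hFp := hF p (X p) (Y p)
    simp only [map_add, map_smul, map_sub]
    linear_combination (norm := module) l⁻¹ • hFp
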